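/- Let v₁,…,v_N be independent uniform in {0,1}^n. The probability that all N templates lie within a common Hamming ε-ball satisfies V_ε^{N-1} ≤ P(∃ t : ∀ i, d_H(t, v_i) ≤ ε) ≤ V_{2ε}^{N-1}, where V_r is the normalized Hamming ball volume of radius r. -/

import Mathlib

open Finset

/-- Normalized volume of a Hamming ball of radius `r` in `{0,1}^n`. -/
noncomputable def Vball (n r : ℕ) : ℝ :=
  (∑ k ∈ Finset.range (r + 1), (n.choose k : ℝ)) / 2 ^ n

lemma sphere_card (n k : ℕ) (x : Fin n → Bool) :
    ((univ : Finset (Fin n → Bool)).filter fun y => hammingDist x y = k).card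
      = n.choose k := by
  rw [show n.choose k = (Finset.powersetCard k (univ : Finset (Fin n))).card by
    rw [Finset.card_powersetCard, Finset.card_univ, Fintype.card_fin]]
  apply Finset.card_bij' (fun y _ => (univ : Finset (Fin n)).filter fun j => x j ≠ y j)
    (fun s _ => fun j => if j ∈ s then !(x j) else x j)
  · intro y hy
    simp only [mem_filter, mem_univ, true_and] at hy
    rw [Finset.mem_powersetCard]
    exact ⟨subset_univ _, hy⟩
  · intro s hs
    rw [Finset.mem_powersetCard] at hs
    simp only [mem_filter, mem_univ, true_and]
    rw [hammingDist, ← hs.2]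
    congr 1
    ext j
    by_cases h : j ∈ s <;> simp [h]
  · intro y hy
    funext j
    by_cases h : x j = y j <;> cases hx : x j <;> cases hy' : y j <;> simp_all
  · intro s hs
    ext j
    by_cases h : j ∈ s <;> simp [h]

lemma ball_card (n r : ℕ) (x : Fin n → Bool) :
    ((univ : Finset (Fin n → Bool)).filter fun y => hammingDist x y ≤ r).card
      = ∑ k ∈ Finset.range (r + 1), n.choose k := by
  have : ((univ : Finset (Fin n → Bool)).filter fun y => hammingDist x y ≤ r)
      = (Finset.range (r + 1)).biUnion
        (fun k => (univ : Finset (Fin n → Bool)).filter fun y => hammingDist x y = k) := by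
    ext y
    simp only [mem_filter, mem_univ, true_and, mem_biUnion, Finset.mem_range]
    constructor
    · intro h; exact ⟨hammingDist x y, by omega, rfl⟩
    · rintro ⟨k, hk, hd⟩; omega
  rw [this, Finset.card_biUnion]
  · exact Finset.sum_congr rfl fun k _ => sphere_card n k x
  · intro a _ b _ hab
    simp only [Finset.disjoint_left, mem_filter, mem_univ, true_and]
    intro y h1 h2
    exact hab (by omega)

lemma anchored_card (n r N : ℕ) [NeZero N] :
    ((univ : Finset (Fin N → (Fin n → Bool))).filter
        fun f => ∀ i, hammingDist (f 0) (f i) ≤ r).card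
      = 2 ^ n * (∑ k ∈ Finset.range (r + 1), n.choose k) ^ (N - 1) := by
  rw [Finset.card_eq_sum_card_fiberwise
    (f := fun f : Fin N → (Fin n → Bool) => f 0) (t := univ) (fun f _ => mem_univ _)]
  have key : ∀ x : Fin n → Bool,
      (((univ : Finset (Fin N → (Fin n → Bool))).filter
        fun f => ∀ i, hammingDist (f 0) (f i) ≤ r).filter fun f => f 0 = x).card
      = (∑ k ∈ Finset.range (r + 1), n.choose k) ^ (N - 1) := by
    intro x
    have hset : (((univ : Finset (Fin N → (Fin n → Bool))).filter
        fun f => ∀ i, hammingDist (f 0) (f i) ≤ r).filter fun f => f 0 = x)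
        = Fintype.piFinset (fun i : Fin N =>
            if i = 0 then {x} else (univ.filter fun y => hammingDist x y ≤ r)) := by
      ext f
      simp only [mem_filter, mem_univ, true_and, Fintype.mem_piFinset]
      constructor
      · rintro ⟨hd, hx⟩ i
        by_cases h : i = 0
        · simp [h, hx]
        · simp only [h, if_neg, if_false]
          simp only [mem_filter, mem_univ, true_and]
          rw [← hx]; exact hd i
      · intro h
        have hx : f 0 = x := by have := h 0; simpa using this
        refine ⟨fun i => ?_, hx⟩
        by_cases hi : i = 0
        · subst hi; simp [hammingDist]
        · have := h i
          simp only [hi, if_false] at this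
          simp only [mem_filter, mem_univ, true_and] at this
          rw [hx]; exact this
    rw [hset, Fintype.card_piFinset]
    have h0 : (0 : Fin N) ∈ (univ : Finset (Fin N)) := mem_univ _
    rw [← Finset.mul_prod_erase _ _ h0, if_pos rfl, Finset.card_singleton, one_mul]
    have hprod : ∀ i ∈ (univ : Finset (Fin N)).erase 0,
        ((if i = 0 then ({x} : Finset (Fin n → Bool))
          else univ.filter fun y => hammingDist x y ≤ r)).card
          = ∑ k ∈ Finset.range (r + 1), n.choose k := by
      intro i hi
      rw [if_neg (Finset.mem_erase.mp hi).1, ball_card]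
    rw [Finset.prod_congr rfl hprod, Finset.prod_const,
      Finset.card_erase_of_mem h0, Finset.card_univ, Fintype.card_fin]
  rw [Finset.sum_congr rfl (fun x _ => key x), Finset.sum_const, Finset.card_univ]
  simp [Fintype.card_fun]

/-- Bounds on the probability that `N` independent uniform templates in `{0,1}^n`
all lie within a common Hamming `ε`-ball, i.e. that an `(N,ε)`-master template exists. -/
theorem master_template_prob_bounds (n N ε : ℕ) :
    Vball n ε ^ (N - 1) ≤
      ((univ.filter (fun f : Fin N → (Fin n → Bool) =>
          ∃ t : Fin n → Bool, ∀ i, hammingDist t (f i) ≤ ε)).card : ℝ) /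
        (Fintype.card (Fin N → Fin n → Bool) : ℝ) ∧
    ((univ.filter (fun f : Fin N → (Fin n → Bool) =>
        ∃ t : Fin n → Bool, ∀ i, hammingDist t (f i) ≤ ε)).card : ℝ) /
      (Fintype.card (Fin N → Fin n → Bool) : ℝ) ≤
    Vball n (2 * ε) ^ (N - 1) := by
  rcases Nat.eq_zero_or_pos N with hN | hN
  · subst hN
    have hfil : (univ.filter (fun f : Fin 0 → (Fin n → Bool) =>
        ∃ t : Fin n → Bool, ∀ i, hammingDist t (f i) ≤ ε)) = univ := by
      apply Finset.filter_true_of_mem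
      intro f _
      exact ⟨fun _ => false, fun i => i.elim0⟩
    rw [hfil]
    have hcard : (Fintype.card (Fin 0 → Fin n → Bool) : ℝ) = 1 := by
      simp
    simp [Finset.card_univ, hcard]
  · haveI : NeZero N := ⟨hN.ne'⟩
    set D : ℝ := (Fintype.card (Fin N → Fin n → Bool) : ℝ) with hD
    have hDval : D = ((2:ℝ) ^ n) ^ N := by
      rw [hD]
      simp [Fintype.card_fun]
    have hDpos : 0 < D := by
      rw [hDval]; positivity
    have h2 : (2:ℝ) ^ n ≠ 0 := by positivity
    have hV : ∀ r : ℕ, Vball n r ^ (N - 1)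
        = ((2 ^ n * (∑ k ∈ Finset.range (r + 1), n.choose k) ^ (N - 1) : ℕ) : ℝ) / D := by
      intro r
      have hNE : N = (N - 1) + 1 := by omega
      rw [Vball, div_pow, hDval, hNE]
      push_cast
      rw [pow_succ]
      field_simp
    constructor
    · rw [hV ε, ← anchored_card n ε N]
      rw [div_le_div_iff_of_pos_right hDpos]
      have hsub : ((univ : Finset (Fin N → (Fin n → Bool))).filter
          fun f => ∀ i, hammingDist (f 0) (f i) ≤ ε) ⊆
          (univ.filter (fun f : Fin N → (Fin n → Bool) =>
            ∃ t : Fin n → Bool, ∀ i, hammingDist t (f i) ≤ ε)) := by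
        intro f hf
        simp only [mem_filter, mem_univ, true_and] at hf ⊢
        exact ⟨f 0, hf⟩
      exact_mod_cast Finset.card_le_card hsub
    · rw [hV (2 * ε), ← anchored_card n (2 * ε) N]
      rw [div_le_div_iff_of_pos_right hDpos]
      have hsub : (univ.filter (fun f : Fin N → (Fin n → Bool) =>
            ∃ t : Fin n → Bool, ∀ i, hammingDist t (f i) ≤ ε)) ⊆
          ((univ : Finset (Fin N → (Fin n → Bool))).filter
          fun f => ∀ i, hammingDist (f 0) (f i) ≤ 2 * ε) := by
        intro f hf
        simp only [mem_filter, mem_univ, true_and] at hf ⊢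
        obtain ⟨t, ht⟩ := hf
        intro i
        calc hammingDist (f 0) (f i) ≤ hammingDist (f 0) t + hammingDist t (f i) :=
              hammingDist_triangle _ _ _
          _ ≤ ε + ε := by
              rw [hammingDist_comm]
              exact Nat.add_le_add (ht 0) (ht i)
          _ = 2 * ε := by ring
      exact_mod_cast Finset.card_le_card hsub
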